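/- Let S be a commutative semiring and 𝔞 an ideal of S. Then the z-closure of 𝔞 equals the z-closure of its radical: cz(𝔞) = cz(√𝔞), where cz(𝔟) denotes the intersection of all z-ideals of S containing 𝔟. -/
import Mathlib


/-- An ideal `I` of a commutative semiring is a *z-ideal* if for every `x ∈ I`,
the intersection of all maximal ideals containing `x` is contained in `I`. -/
def IsZIdeal {S : Type*} [CommSemiring S] (I : Ideal S) : Prop :=
  ∀ x ∈ I, sInf {m : Ideal S | m.IsMaximal ∧ x ∈ m} ≤ I

/-- The *z-closure* of an ideal: the intersection of all z-ideals containing it. -/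
def zClosure {S : Type*} [CommSemiring S] (a : Ideal S) : Ideal S :=
  sInf {z : Ideal S | IsZIdeal z ∧ a ≤ z}

theorem zClosure_radical {S : Type*} [CommSemiring S] (a : Ideal S) :
    zClosure a = zClosure a.radical := by
  unfold zClosure
  congr 1
  ext z
  simp only [Set.mem_setOf_eq, and_congr_right_iff]
  intro hz
  constructor
  · intro haz x hx
    obtain ⟨n, hn⟩ := hx
    have h := hz (x ^ n) (haz hn)
    refine h ?_
    rw [Ideal.mem_sInf]
    rintro m ⟨hm, hxm⟩
    exact hm.isPrime.mem_of_pow_mem n hxm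
  · intro h
    exact le_trans Ideal.le_radical h
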